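/- Let D = d/dx act on smooth complex-valued functions on ℝ, let Ẽ_λ denote multiplication by e^{λx}, and fix λ ∈ ℂ. Then for all n > 0 and all integers j with 0 ≤ j ≤ n-1, the function Σ_{k=0}^{n} C(n,k) [(D - Ẽ_λ)∘(D - Ẽ_λ + λ)∘…∘(D - Ẽ_λ + (k-1)λ)] (e^{(n-k)λx} · e^{-jλx}) is identically zero, i.e., B(n,λ,Ẽ_λ,D) applied to the function e^{-jλx} is 0. -/

import Mathlib

/-- The binomial-type combination `B(n, λ, U, D)`, with the products ordered
left to right in increasing `j`. -/
noncomputable def binomB {K A : Type*} [Field K] [Ring A] [Algebra K A]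
    (n : ℕ) (l : K) (U D : A) : A :=
  ∑ k ∈ Finset.range (n + 1),
    n.choose k •
      (((List.range k).map (fun j : ℕ => D - U + ((j : K) * l) • (1 : A))).prod * U ^ (n - k))


noncomputable section

def SmoothC : Submodule ℂ (ℝ → ℂ) where
  carrier := {f | ContDiff ℝ (⊤ : ℕ∞) f}
  add_mem' := fun {a b} (ha : ContDiff ℝ (⊤ : ℕ∞) a) (hb : ContDiff ℝ (⊤ : ℕ∞) b) => ha.add hb
  zero_mem' := (contDiff_const : ContDiff ℝ (⊤ : ℕ∞) fun _ => (0 : ℂ))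
  smul_mem' := fun c f (hf : ContDiff ℝ (⊤ : ℕ∞) f) => hf.const_smul c

lemma smoothC_contDiff (f : SmoothC) : ContDiff ℝ (⊤ : ℕ∞) (f : ℝ → ℂ) := f.2

lemma smoothC_mem (f : ℝ → ℂ) (hf : ContDiff ℝ (⊤ : ℕ∞) f) : f ∈ SmoothC := hf

/-- Differentiation `d/dx` as a linear operator on smooth functions. -/
def Dop : Module.End ℂ SmoothC where
  toFun f := ⟨deriv f, smoothC_mem _ (contDiff_infty_iff_deriv.mp (smoothC_contDiff f)).2⟩
  map_add' f g := by
    ext x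
    exact deriv_add ((smoothC_contDiff f).differentiable (by simp) x)
      ((smoothC_contDiff g).differentiable (by simp) x)
  map_smul' c f := by
    ext x
    exact deriv_const_smul c ((smoothC_contDiff f).differentiable (by simp) x)

/-- Multiplication by a smooth function as a linear operator on smooth functions. -/
def Mop (g : ℝ → ℂ) (hg : ContDiff ℝ (⊤ : ℕ∞) g) : Module.End ℂ SmoothC where
  toFun f := ⟨g * f, smoothC_mem _ (hg.mul (smoothC_contDiff f))⟩
  map_add' f g' := by ext x; simp [mul_add]
  map_smul' c f := by ext x; simp; ring

lemma expSmooth (l : ℂ) : ContDiff ℝ (⊤ : ℕ∞) (fun x : ℝ => Complex.exp (l * x)) :=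
  ((Complex.contDiff_exp (𝕜 := ℂ)).restrict_scalars ℝ).comp
    (contDiff_const.mul Complex.ofRealCLM.contDiff)

end

section RingLemma
variable {K A : Type*} [Field K] [Ring A] [Algebra K A] (l : K) (U D : A)

lemma pow_mul_D (h : D * U - U * D = l • U) (m : ℕ) :
    U ^ m * D = D * U ^ m - ((m : K) * l) • U ^ m := by
  induction m with
  | zero => simp
  | succ m ih =>
    have hUD : U * D = D * U - l • U := by rw [← h]; abel
    calc U ^ (m+1) * D = U ^ m * (U * D) := by rw [pow_succ, mul_assoc]
    _ = U ^ m * (D * U) - l • U ^ (m+1) := by rw [hUD, mul_sub, mul_smul_comm, ← pow_succ]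
    _ = (D * U ^ m - ((m:K)*l) • U ^ m) * U - l • U ^ (m+1) := by rw [← mul_assoc, ih]
    _ = D * U ^ (m+1) - (((m+1 : ℕ) : K) * l) • U ^ (m+1) := by
        rw [sub_mul, smul_mul_assoc, mul_assoc, ← pow_succ]
        push_cast
        rw [add_mul, one_mul, add_smul]
        abel

lemma binomB_eq (h : D * U - U * D = l • U) (n : ℕ) :
    binomB n l U D = ((List.range n).map (fun i : ℕ => D + ((i : K) * l) • (1 : A))).prod := by
  induction n with
  | zero => simp [binomB]
  | succ n ih =>
    set P : ℕ → A := fun k => ((List.range k).map (fun j : ℕ => D - U + ((j : K) * l) • (1 : A))).prod with hP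
    have hPsucc : ∀ k, P (k+1) = P k * (D - U + ((k:K)*l) • 1) := by
      intro k; simp only [hP, List.range_succ, List.map_append, List.prod_append,
        List.map_cons, List.map_nil, List.prod_cons, List.prod_nil, mul_one]
    have key : ∀ k ≤ n, P k * U ^ (n - k) * (D + ((n:K)*l) • 1) =
        P (k+1) * U ^ (n - k) + P k * U ^ (n + 1 - k) := by
      intro k hk
      set m := n - k with hm
      have hm1 : n + 1 - k = m + 1 := by omega
      have hcast : ((m : K) * l - (n : K) * l) = -((k:K)*l) := by
        have : ((m : ℕ) : K) = (n : K) - (k : K) := by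
          rw [hm]; push_cast [hk]; ring
        rw [this]; ring
      have h1 : U ^ m * (D + ((n:K)*l) • 1) = D * U ^ m + ((k:K)*l) • U ^ m := by
        rw [mul_add, mul_smul_comm, mul_one, pow_mul_D l U D h m, sub_add, ← sub_smul,
          hcast, neg_smul, sub_neg_eq_add]
      have h2 : (D - U + ((k:K)*l) • 1) * U ^ m = D * U ^ m + ((k:K)*l) • U ^ m - U ^ (m+1) := by
        rw [add_mul, sub_mul, smul_mul_assoc, one_mul, ← pow_succ']
        abel
      rw [mul_assoc, h1, hPsucc, hm1, mul_assoc, h2, pow_succ]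
      simp only [mul_sub, mul_add]
      abel
    set T : ℕ → A := fun k => P k * U ^ (n + 1 - k) with hT
    have choose_sum : ∑ k ∈ Finset.range (n+1), n.choose (k+1) • T (k+1) + n.choose 0 • T 0
        = ∑ k ∈ Finset.range (n+1), n.choose k • T k := by
      rw [← Finset.sum_range_succ' (fun k => n.choose k • T k) (n+1)]
      rw [Finset.sum_range_succ]
      simp [Nat.choose_succ_self]
    have lhs_eq : binomB (n+1) l U D
        = ∑ k ∈ Finset.range (n+1), n.choose k • T (k+1)
          + ∑ k ∈ Finset.range (n+1), n.choose k • T k := by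
      show ∑ k ∈ Finset.range (n+1+1), (n+1).choose k • T k = _
      rw [Finset.sum_range_succ' (fun k => (n+1).choose k • T k) (n+1)]
      simp only [Nat.choose_succ_succ, add_smul]
      rw [Finset.sum_add_distrib, add_assoc]
      congr 1
      rw [← choose_sum]
      simp [Nat.choose_zero_right]
    have rhs_eq : ((List.range (n+1)).map (fun i : ℕ => D + ((i : K) * l) • (1 : A))).prod
        = binomB n l U D * (D + ((n:K)*l) • 1) := by
      rw [List.range_succ]
      simp only [List.map_append, List.prod_append, List.map_cons, List.map_nil,
        List.prod_cons, List.prod_nil, mul_one, ← ih]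
    have hbin : binomB n l U D * (D + ((n:K)*l) • 1)
        = ∑ k ∈ Finset.range (n+1),
            n.choose k • (P k * U ^ (n - k) * (D + ((n:K)*l) • 1)) := by
      unfold binomB
      rw [Finset.sum_mul]
      simp only [smul_mul_assoc, hP]
    have step : ∀ k ∈ Finset.range (n+1),
        n.choose k • (P k * U ^ (n - k) * (D + ((n:K)*l) • 1))
          = n.choose k • T (k+1) + n.choose k • T k := by
      intro k hk
      rw [key k (Nat.lt_succ_iff.mp (Finset.mem_range.mp hk)), smul_add]
      congr 2
      simp [hT, Nat.succ_sub_succ]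
    rw [lhs_eq, rhs_eq, hbin, Finset.sum_congr rfl step, Finset.sum_add_distrib]
end RingLemma


lemma exp_hasDerivAt (l : ℂ) (x : ℝ) :
    HasDerivAt (fun x : ℝ => Complex.exp (l * x)) (l * Complex.exp (l * x)) x := by
  have h1 : HasDerivAt (fun x : ℝ => l * (x : ℂ)) l x := by
    simpa using (Complex.ofRealCLM.hasDerivAt (x := x)).const_mul l
  simpa [mul_comm] using h1.cexp

lemma deriv_exp_eq (l : ℂ) : deriv (fun x : ℝ => Complex.exp (l * x)) = fun x : ℝ => l * Complex.exp (l * x) := by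
  funext x; exact (exp_hasDerivAt l x).deriv

lemma Dop_apply (f : SmoothC) : ((Dop f : SmoothC) : ℝ → ℂ) = deriv (f : ℝ → ℂ) := rfl

lemma Mop_apply (g : ℝ → ℂ) (hg : ContDiff ℝ (⊤ : ℕ∞) g) (f : SmoothC) :
    ((Mop g hg f : SmoothC) : ℝ → ℂ) = g * (f : ℝ → ℂ) := rfl

lemma DMcommutator (l : ℂ) :
    Dop * Mop (fun x : ℝ => Complex.exp (l * x)) (expSmooth l)
      - Mop (fun x : ℝ => Complex.exp (l * x)) (expSmooth l) * Dop
    = l • Mop (fun x : ℝ => Complex.exp (l * x)) (expSmooth l) := by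
  ext f x
  have hf : DifferentiableAt ℝ (f : ℝ → ℂ) x :=
    (smoothC_contDiff f).differentiable (by simp) x
  have hd : deriv (fun y : ℝ => Complex.exp (l * y) * (f : ℝ → ℂ) y) x
      = l * Complex.exp (l * x) * (f : ℝ → ℂ) x + Complex.exp (l * x) * deriv (f : ℝ → ℂ) x := by
    rw [deriv_fun_mul ((exp_hasDerivAt l x).differentiableAt) hf, (exp_hasDerivAt l x).deriv]
  simp only [Module.End.mul_apply, Submodule.coe_sub, LinearMap.sub_apply,
    LinearMap.smul_apply, SetLike.val_smul]
  show (deriv (fun y : ℝ => Complex.exp (l*y) * (f : ℝ → ℂ) y) - (fun y : ℝ => Complex.exp (l*y)) * deriv (f : ℝ → ℂ)) x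
      = (l • ((fun y : ℝ => Complex.exp (l*y)) * (f : ℝ → ℂ))) x
  simp only [Pi.sub_apply, Pi.mul_apply, Pi.smul_apply, smul_eq_mul, hd]
  ring

lemma Dop_eigen (c : ℂ) :
    Dop ⟨fun x : ℝ => Complex.exp (c * x), smoothC_mem _ (expSmooth c)⟩
      = c • ⟨fun x : ℝ => Complex.exp (c * x), smoothC_mem _ (expSmooth c)⟩ := by
  ext x
  show deriv (fun x : ℝ => Complex.exp (c * x)) x = c • Complex.exp (c * x)
  rw [deriv_exp_eq]; simp

lemma prod_eig {M : Type*} [AddCommGroup M] [Module ℂ M] (T : Module.End ℂ M)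
    (v : M) (c : ℂ) (hv : T v = c • v) (cs : List ℂ) :
    ((cs.map (fun a => T + a • (1 : Module.End ℂ M))).prod) v
      = (cs.map (fun a => c + a)).prod • v := by
  induction cs with
  | nil => simp
  | cons a rest ih =>
    simp only [List.map_cons, List.prod_cons, Module.End.mul_apply, ih]
    rw [map_smul, LinearMap.add_apply, hv, LinearMap.smul_apply, Module.End.one_apply,
      mul_smul]
    rw [smul_add, smul_smul, smul_smul]
    module


theorem binomB_exp_annihilates (l : ℂ) (n j : ℕ) (hn : 0 < n) (hj : j ≤ n - 1) :
    binomB n l (Mop (fun x : ℝ => Complex.exp (l * x)) (expSmooth l)) Dop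
      ⟨fun x : ℝ => Complex.exp ((-(j : ℂ) * l) * x),
        smoothC_mem _ (expSmooth (-(j : ℂ) * l))⟩ = 0 := by
  have heig := Dop_eigen (-(j : ℂ) * l)
  have hB := binomB_eq l (Mop (fun x : ℝ => Complex.exp (l * x)) (expSmooth l)) Dop
    (DMcommutator l) n
  rw [hB]
  have hmap : (List.range n).map
      (fun i : ℕ => Dop + ((i : ℂ) * l) • (1 : Module.End ℂ SmoothC))
      = ((List.range n).map (fun i : ℕ => (i : ℂ) * l)).map
          (fun a : ℂ => Dop + a • (1 : Module.End ℂ SmoothC)) := by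
    rw [List.map_map]; rfl
  rw [hmap, prod_eig Dop _ (-(j : ℂ) * l) heig]
  have hzero : (((List.range n).map (fun i : ℕ => (i : ℂ) * l)).map
      (fun a : ℂ => -(j : ℂ) * l + a)).prod = 0 := by
    apply List.prod_eq_zero
    simp only [List.map_map, List.mem_map, List.mem_range, Function.comp]
    exact ⟨j, by omega, by ring⟩
  rw [hzero, zero_smul]
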